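/- Let c₁, c₂ ∈ ℝ with c₁² + c₂² > 0. Then there exists a finite constant C = C(c₁,c₂) such that for every λ > 0, ∫_{[0,1]²} (λ + v₁² + v₂²)/((c₁·v₁ + c₂·v₂)² + (λ + v₁² + v₂²)²) dv₁ dv₂ ≤ C. -/

import Mathlib

open MeasureTheory
open Set intervalIntegral

lemma Gpos {k t : ℝ} (hk : 0 < k) (ht : 0 < t) (u : ℝ) : 0 < k * |u| + t := by
  have := abs_nonneg u; nlinarith

lemma Gcont {k t : ℝ} (hk : 0 < k) (ht : 0 < t) :
    Continuous (fun u : ℝ => 2 / (k * |u| + t)) := by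
  apply continuous_const.div (by fun_prop)
  exact fun u => ne_of_gt (Gpos hk ht u)

lemma ftc_half {k t M : ℝ} (hk : 0 < k) (ht : 0 < t) (hM : 0 ≤ M) :
    ∫ u in (0:ℝ)..M, 2 / (k * u + t) = (2/k) * (Real.log (k*M+t) - Real.log t) := by
  have hpos : ∀ u ∈ uIcc (0:ℝ) M, 0 < k * u + t := by
    intro u hu
    rw [uIcc_of_le hM] at hu
    nlinarith [hu.1]
  have hderiv : ∀ u ∈ uIcc (0:ℝ) M,
      HasDerivAt (fun u => (2/k) * Real.log (k*u+t)) (2 / (k*u+t)) u := by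
    intro u hu
    have h1 : HasDerivAt (fun u : ℝ => k*u+t) k u := by
      simpa using ((hasDerivAt_id u).const_mul k).add_const t
    have h2 := (Real.hasDerivAt_log (ne_of_gt (hpos u hu))).comp u h1
    have h3 := h2.const_mul (2/k)
    have hk0 : k ≠ 0 := hk.ne'
    have hne : k*u+t ≠ 0 := ne_of_gt (hpos u hu)
    rw [show 2/(k*u+t) = 2/k*((k*u+t)⁻¹*k) by field_simp]
    exact h3
  have hint : IntervalIntegrable (fun u => 2 / (k*u+t)) volume 0 M := by
    apply ContinuousOn.intervalIntegrable
    apply continuousOn_const.div (by fun_prop)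
    exact fun u hu => ne_of_gt (hpos u hu)
  rw [integral_eq_sub_of_hasDerivAt hderiv hint]
  simp [mul_sub]

lemma intG {k t M : ℝ} (hk : 0 < k) (ht : 0 < t) (hM : 0 ≤ M) :
    ∫ u in Ioc (-M) M, 2 / (k * |u| + t) = (4/k) * (Real.log (k*M+t) - Real.log t) := by
  have hG := Gcont hk ht
  have hMM : -M ≤ M := by linarith
  rw [← intervalIntegral.integral_of_le hMM]
  have hsplit := intervalIntegral.integral_add_adjacent_intervals
    (hG.intervalIntegrable (μ := volume) (-M) 0) (hG.intervalIntegrable (μ := volume) 0 M)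
  rw [← hsplit]
  have hneg : (∫ u in (-M:ℝ)..0, 2 / (k * |u| + t)) = ∫ u in (0:ℝ)..M, 2 / (k * |u| + t) := by
    have : (∫ u in (-M:ℝ)..0, 2 / (k * |u| + t))
        = ∫ u in (-M:ℝ)..0, 2 / (k * |(-u)| + t) := by
      simp [abs_neg]
    rw [this, intervalIntegral.integral_comp_neg (fun u => 2 / (k * |u| + t))]
    norm_num
  have habs : (∫ u in (0:ℝ)..M, 2 / (k * |u| + t)) = ∫ u in (0:ℝ)..M, 2 / (k * u + t) := by
    apply intervalIntegral.integral_congr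
    intro u hu
    rw [uIcc_of_le hM] at hu
    simp only []
    rw [abs_of_nonneg hu.1]
  rw [hneg, habs, ftc_half hk ht hM]
  ring

lemma sqrt_inv_intOn : IntegrableOn (fun x : ℝ => (Real.sqrt x)⁻¹) (Ioc (0:ℝ) 1) volume := by
  have h : IntervalIntegrable (fun x : ℝ => x ^ (-(1/2) : ℝ)) volume 0 1 :=
    intervalIntegral.intervalIntegrable_rpow' (by norm_num)
  apply h.1.congr_fun ?_ measurableSet_Ioc
  intro x hx
  simp only []
  rw [Real.rpow_neg hx.1.le, Real.sqrt_eq_rpow]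

lemma aux (c₁ c₂ : ℝ) (hc₂ : c₂ ≠ 0) :
    ∃ C : ℝ, ∀ lam : ℝ, 0 < lam →
      ∫ v in (Set.Icc (0 : ℝ) 1) ×ˢ (Set.Icc (0 : ℝ) 1),
          (lam + v.1 ^ 2 + v.2 ^ 2) /
            ((c₁ * v.1 + c₂ * v.2) ^ 2 + (lam + v.1 ^ 2 + v.2 ^ 2) ^ 2) ≤ C := by
  have hk : 0 < |c₂| := abs_pos.mpr hc₂
  set k : ℝ := |c₂| with hkdef
  set a : ℝ := c₁ / c₂ with hadef
  set M : ℝ := 1 + |a| with hMdef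
  have hM0 : 0 ≤ M := by positivity
  set L : ℝ := Real.log (k * M + 1) with hLdef
  refine ⟨∫ x in Set.Icc (0:ℝ) 1, (4/k * L + 16/k * (Real.sqrt x)⁻¹), ?_⟩
  intro lam hlam
  set S : Set ℝ := Set.Icc (0:ℝ) 1 with hSdef
  set F : ℝ × ℝ → ℝ := fun v => (lam + v.1 ^ 2 + v.2 ^ 2) /
      ((c₁ * v.1 + c₂ * v.2) ^ 2 + (lam + v.1 ^ 2 + v.2 ^ 2) ^ 2) with hFdef
  have hA : ∀ v : ℝ × ℝ, 0 < lam + v.1 ^ 2 + v.2 ^ 2 := by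
    intro v; nlinarith [sq_nonneg v.1, sq_nonneg v.2]
  have hden : ∀ v : ℝ × ℝ,
      (c₁ * v.1 + c₂ * v.2) ^ 2 + (lam + v.1 ^ 2 + v.2 ^ 2) ^ 2 ≠ 0 := by
    intro v
    have := hA v
    positivity
  have hFc : Continuous F := by
    apply Continuous.div (by fun_prop) (by fun_prop) hden
  have hFint : IntegrableOn F (S ×ˢ S) := by
    exact hFc.continuousOn.integrableOn_compact (isCompact_Icc.prod isCompact_Icc)
  have hFint' : Integrable F ((volume.restrict S).prod (volume.restrict S)) := by
    rw [Measure.prod_restrict, ← Measure.volume_eq_prod]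
    exact hFint
  have step1 : ∫ v in S ×ˢ S, F v = ∫ x in S, ∫ y in S, F (x, y) := by
    rw [Measure.volume_eq_prod]
    exact setIntegral_prod F (by rw [← Measure.volume_eq_prod]; exact hFint)
  have hmarg : IntegrableOn (fun x => ∫ y in S, F (x, y)) S :=
    hFint'.integral_prod_left
  have hmargIoc : IntegrableOn (fun x => ∫ y in S, F (x, y)) (Set.Ioc (0:ℝ) 1) :=
    hmarg.mono_set Set.Ioc_subset_Icc_self
  have hhint : IntegrableOn (fun x : ℝ => 4/k * L + 16/k * (Real.sqrt x)⁻¹)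
      (Set.Ioc (0:ℝ) 1) := by
    apply Integrable.add
    · exact integrableOn_const measure_Ioc_lt_top.ne
    · exact sqrt_inv_intOn.const_mul _
  have hpt : ∀ x ∈ Set.Ioc (0:ℝ) 1,
      (∫ y in S, F (x, y)) ≤ 4/k * L + 16/k * (Real.sqrt x)⁻¹ := by
    intro x hx
    have hx0 : 0 < x := hx.1
    have hx1 : x ≤ 1 := hx.2
    have ht : 0 < x ^ 2 := by positivity
    set t : ℝ := x ^ 2 with htdef
    -- pointwise bound
    have h1 : ∀ y ∈ S, F (x, y) ≤ 2 / (k * |y + a * x| + t) := by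
      intro y hy
      have hAp : 0 < lam + x ^ 2 + y ^ 2 := hA (x, y)
      have hB : c₁ * x + c₂ * y = c₂ * (y + a * x) := by
        rw [hadef]
        field_simp
        ring
      have hBabs : k * |y + a * x| = |c₁ * x + c₂ * y| := by
        rw [hB, abs_mul]
      have hgd : 0 < k * |y + a * x| + t := Gpos hk ht _
      have hdp : 0 < (c₁ * x + c₂ * y) ^ 2 + (lam + x ^ 2 + y ^ 2) ^ 2 := by positivity
      show (lam + x ^ 2 + y ^ 2) /
          ((c₁ * x + c₂ * y) ^ 2 + (lam + x ^ 2 + y ^ 2) ^ 2) ≤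
          2 / (k * |y + a * x| + t)
      rw [div_le_div_iff₀ hdp hgd, hBabs]
      nlinarith [sq_abs (c₁ * x + c₂ * y), abs_nonneg (c₁ * x + c₂ * y),
        sq_nonneg (|c₁ * x + c₂ * y| - (lam + x ^ 2 + y ^ 2)), sq_nonneg y, hlam,
        sq_nonneg (c₁ * x + c₂ * y)]
    have hGc : Continuous (fun u : ℝ => 2 / (k * |u| + t)) := Gcont hk ht
    have h2 : (∫ y in S, F (x, y)) ≤ ∫ y in S, 2 / (k * |y + a * x| + t) := by
      apply setIntegral_mono_on
      · exact (hFc.comp (Continuous.prodMk_right x)).integrableOn_Icc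
      · exact (hGc.comp (continuous_id.add continuous_const)).integrableOn_Icc
      · exact measurableSet_Icc
      · exact h1
    have h3 : (∫ y in S, 2 / (k * |y + a * x| + t))
        = ∫ u in (a*x)..(1+a*x), 2 / (k * |u| + t) := by
      rw [hSdef, integral_Icc_eq_integral_Ioc,
        ← intervalIntegral.integral_of_le (zero_le_one),
        intervalIntegral.integral_comp_add_right (fun u => 2 / (k * |u| + t)) (a*x)]
      norm_num
    have hax : |a * x| ≤ |a| := by
      rw [abs_mul, abs_of_pos hx0]
      nlinarith [abs_nonneg a]
    have h4 : (∫ u in (a*x)..(1+a*x), 2 / (k * |u| + t))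
        ≤ ∫ u in Set.Ioc (-M) M, 2 / (k * |u| + t) := by
      rw [intervalIntegral.integral_of_le (by linarith : a*x ≤ 1+a*x)]
      apply setIntegral_mono_set
      · exact (hGc.intervalIntegrable (μ := volume) (-M) M).1
      · exact Filter.Eventually.of_forall fun u => le_of_lt (by
          have := Gpos hk ht u
          positivity)
      · apply HasSubset.Subset.eventuallyLE
        apply Set.Ioc_subset_Ioc
        · nlinarith [neg_abs_le (a*x)]
        · nlinarith [le_abs_self (a*x)]
    have h5 : (∫ u in Set.Ioc (-M) M, 2 / (k * |u| + t))
        = (4/k) * (Real.log (k*M+t) - Real.log t) := intG hk ht hM0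
    have hlog1 : Real.log (k*M+t) ≤ L := by
      apply Real.log_le_log (by positivity)
      nlinarith
    have hs : 0 < Real.sqrt x := Real.sqrt_pos.mpr hx0
    have hlog2 : -Real.log t ≤ 4 * (Real.sqrt x)⁻¹ := by
      have hle := Real.log_le_sub_one_of_pos (inv_pos.mpr hs)
      rw [Real.log_inv, Real.log_sqrt hx0.le] at hle
      have hlt : Real.log t = 2 * Real.log x := by
        rw [htdef]
        rw [Real.log_pow]
        norm_num
      rw [hlt]
      linarith
    have h6 : (4/k) * (Real.log (k*M+t) - Real.log t) ≤ 4/k * L + 16/k * (Real.sqrt x)⁻¹ := by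
      have h41 : (0:ℝ) ≤ 4/k := by positivity
      have := mul_le_mul_of_nonneg_left
        (by linarith : Real.log (k*M+t) - Real.log t ≤ L + 4 * (Real.sqrt x)⁻¹) h41
      calc (4/k) * (Real.log (k*M+t) - Real.log t) ≤ (4/k) * (L + 4 * (Real.sqrt x)⁻¹) := this
        _ = 4/k * L + 16/k * (Real.sqrt x)⁻¹ := by ring
    calc (∫ y in S, F (x, y)) ≤ ∫ y in S, 2 / (k * |y + a * x| + t) := h2
      _ = ∫ u in (a*x)..(1+a*x), 2 / (k * |u| + t) := h3
      _ ≤ ∫ u in Set.Ioc (-M) M, 2 / (k * |u| + t) := h4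
      _ = (4/k) * (Real.log (k*M+t) - Real.log t) := h5
      _ ≤ 4/k * L + 16/k * (Real.sqrt x)⁻¹ := h6
  calc ∫ v in S ×ˢ S, F v = ∫ x in S, ∫ y in S, F (x, y) := step1
    _ = ∫ x in Set.Ioc (0:ℝ) 1, ∫ y in S, F (x, y) := by
        rw [hSdef, integral_Icc_eq_integral_Ioc]
    _ ≤ ∫ x in Set.Ioc (0:ℝ) 1, (4/k * L + 16/k * (Real.sqrt x)⁻¹) :=
        setIntegral_mono_on hmargIoc hhint measurableSet_Ioc hpt
    _ = ∫ x in Set.Icc (0:ℝ) 1, (4/k * L + 16/k * (Real.sqrt x)⁻¹) :=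
        (integral_Icc_eq_integral_Ioc).symm

theorem stmt_7 (c₁ c₂ : ℝ) (hc : 0 < c₁ ^ 2 + c₂ ^ 2) :
    ∃ C : ℝ, ∀ lam : ℝ, 0 < lam →
      ∫ v in (Set.Icc (0 : ℝ) 1) ×ˢ (Set.Icc (0 : ℝ) 1),
          (lam + v.1 ^ 2 + v.2 ^ 2) /
            ((c₁ * v.1 + c₂ * v.2) ^ 2 + (lam + v.1 ^ 2 + v.2 ^ 2) ^ 2) ≤ C := by
  by_cases hc₂ : c₂ = 0
  · have hc₁ : c₁ ≠ 0 := by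
      intro h
      rw [h, hc₂] at hc
      norm_num at hc
    obtain ⟨C, hC⟩ := aux c₂ c₁ hc₁
    refine ⟨C, fun lam hlam => ?_⟩
    have hswap : (∫ v in (Set.Icc (0:ℝ) 1) ×ˢ (Set.Icc (0:ℝ) 1),
          (lam + v.1 ^ 2 + v.2 ^ 2) /
            ((c₁ * v.1 + c₂ * v.2) ^ 2 + (lam + v.1 ^ 2 + v.2 ^ 2) ^ 2))
        = ∫ v in (Set.Icc (0:ℝ) 1) ×ˢ (Set.Icc (0:ℝ) 1),
          (lam + v.1 ^ 2 + v.2 ^ 2) /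
            ((c₂ * v.1 + c₁ * v.2) ^ 2 + (lam + v.1 ^ 2 + v.2 ^ 2) ^ 2) := by
      set S : Set ℝ := Set.Icc (0:ℝ) 1 with hSdef
      set f₁ : ℝ × ℝ → ℝ := fun v => (lam + v.1 ^ 2 + v.2 ^ 2) /
            ((c₁ * v.1 + c₂ * v.2) ^ 2 + (lam + v.1 ^ 2 + v.2 ^ 2) ^ 2) with hf₁
      set f₂ : ℝ × ℝ → ℝ := fun v => (lam + v.1 ^ 2 + v.2 ^ 2) /
            ((c₂ * v.1 + c₁ * v.2) ^ 2 + (lam + v.1 ^ 2 + v.2 ^ 2) ^ 2) with hf₂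
      have hfeq : (fun z : ℝ × ℝ => f₁ z.swap) = f₂ := by
        funext z
        rw [hf₁, hf₂]
        simp only [Prod.fst_swap, Prod.snd_swap]
        ring
      calc (∫ v in S ×ˢ S, f₁ v)
          = ∫ v, f₁ v ∂((volume.restrict S).prod (volume.restrict S)) := by
            rw [Measure.prod_restrict, ← Measure.volume_eq_prod]
        _ = ∫ v, f₁ v.swap ∂((volume.restrict S).prod (volume.restrict S)) :=
            (integral_prod_swap f₁).symm
        _ = ∫ v, f₂ v ∂((volume.restrict S).prod (volume.restrict S)) := by rw [hfeq]
        _ = ∫ v in S ×ˢ S, f₂ v := by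
            rw [Measure.prod_restrict, ← Measure.volume_eq_prod]
    rw [hswap]
    exact hC lam hlam
  · obtain ⟨C, hC⟩ := aux c₁ c₂ hc₂
    exact ⟨C, hC⟩
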